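/- Every non-bipartite colorful graph G has power thickness θ(G) = 1. -/

import Mathlib

structure SGraph where
  V : Type
  Adj : V → V → Prop
  symm : ∀ u v, Adj u v → Adj v u

namespace SGraph

/-- There is a walk of length exactly `n` from `u` to `v`. -/
def walkLen (G : SGraph) : ℕ → G.V → G.V → Prop
  | 0, u, v => u = v
  | n+1, u, v => ∃ w, G.Adj u w ∧ G.walkLen n w v

theorem walkLen_concat (G : SGraph) : ∀ (n : ℕ) (u v w : G.V),
    G.walkLen n u v → G.Adj v w → G.walkLen (n+1) u w := by
  intro n
  induction n with
  | zero =>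
      intro u v w h hadj
      cases h
      exact ⟨w, hadj, rfl⟩
  | succ n ih =>
      rintro u v w ⟨x, hux, hxv⟩ hadj
      exact ⟨x, hux, ih x v w hxv hadj⟩

theorem walkLen_symm (G : SGraph) : ∀ (n : ℕ) (u v : G.V),
    G.walkLen n u v → G.walkLen n v u := by
  intro n
  induction n with
  | zero => intro u v h; exact h.symm
  | succ n ih =>
      rintro u v ⟨w, huw, hwv⟩
      exact G.walkLen_concat n v w u (ih w v hwv) (G.symm u w huw)

/-- The `k`-th power of a graph: same vertices, adjacency = existence of a
walk of length exactly `k` (loops allowed). -/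
def pow (G : SGraph) (k : ℕ) : SGraph where
  V := G.V
  Adj u v := G.walkLen k u v
  symm := G.walkLen_symm k

/-- Existence of a graph homomorphism. -/
def homTo (G H : SGraph) : Prop :=
  ∃ f : G.V → H.V, ∀ u v, G.Adj u v → H.Adj (f u) (f v)

/-- The `(2s+1)`-subdivision `S_{2s+1}(G)`: every edge is replaced by a path
of length `2s+1`.  Following the paper's notation, the ordered pair `(u,v)`
(with `u ~ v`) carries the `s` inner vertices `(uv)_1, …, (uv)_s`. -/
def subdiv (G : SGraph) (s : ℕ) : SGraph where
  V := G.V ⊕ ({p : G.V × G.V // G.Adj p.1 p.2} × Fin s)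
  Adj x y :=
    match x, y with
    | Sum.inl u, Sum.inl v => s = 0 ∧ G.Adj u v
    | Sum.inl u, Sum.inr (e, k) => u = e.1.2 ∧ (k : ℕ) = s - 1
    | Sum.inr (e, k), Sum.inl u => u = e.1.2 ∧ (k : ℕ) = s - 1
    | Sum.inr (e, k), Sum.inr (e', l) =>
        e'.1.1 = e.1.2 ∧ e'.1.2 = e.1.1 ∧
        ((k : ℕ) + (l : ℕ) + 2 = s ∨ (k : ℕ) + (l : ℕ) + 2 = s + 1)
  symm := by
    rintro (u | ⟨e, k⟩) (v | ⟨e', l⟩) h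
    · exact ⟨h.1, G.symm _ _ h.2⟩
    · exact h
    · exact h
    · obtain ⟨h1, h2, h3⟩ := h
      exact ⟨h2.symm, h1.symm, by omega⟩

/-- `q < og(G)`: the rational `q` is smaller than the odd girth of `G`
(the length of a shortest odd closed walk; vacuously true if `G` is bipartite). -/
def ltOddGirth (G : SGraph) (q : ℚ) : Prop :=
  ∀ n : ℕ, Odd n → (∃ v, G.walkLen n v v) → q < (n : ℚ)

/-- A graph is non-bipartite iff it contains an odd closed walk. -/
def Nonbipartite (G : SGraph) : Prop :=
  ∃ (n : ℕ) (v : G.V), Odd n ∧ G.walkLen n v v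

/-- The odd girth, as an extended natural number (`⊤` for bipartite graphs). -/
noncomputable def oddGirth (G : SGraph) : ℕ∞ :=
  sInf {N : ℕ∞ | ∃ n : ℕ, N = (n : ℕ∞) ∧ Odd n ∧ ∃ v, G.walkLen n v v}

/-- The complete graph on `m` vertices. -/
def completeGraph (m : ℕ) : SGraph :=
  ⟨Fin m, fun u v => u ≠ v, fun _ _ h => h.symm⟩

/-- The chromatic number: least `m` such that `G` maps homomorphically to `K_m`. -/
noncomputable def chromatic (G : SGraph) : ℕ :=
  sInf {m : ℕ | G.homTo (completeGraph m)}

/-- The `i`-th power thickness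
`θ_i(G) = sup { (2r+1)/(2s+1) | χ(G^{(2r+1)/(2s+1)}) ≤ χ(G)+i, (2r+1)/(2s+1) < og(G) }`. -/
noncomputable def powerThickness (G : SGraph) (i : ℤ) : ℝ :=
  sSup {x : ℝ | ∃ r s : ℕ, x = (2*(r:ℝ)+1)/(2*(s:ℝ)+1) ∧
    ((((G.subdiv s).pow (2*r+1)).chromatic : ℤ) ≤ (G.chromatic : ℤ) + i) ∧
    G.ltOddGirth ((2*(r:ℚ)+1)/(2*(s:ℚ)+1))}

/-- The graph `H^{-1/(2r+1)}`. -/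
def negPow (H : SGraph) (r : ℕ) : SGraph where
  V := {A : Fin (r+1) → Set H.V //
        (∃ v, A 0 = {v}) ∧
        ∀ i : Fin (r+1), (A i).Nonempty ∧ A i ⊆ {u | ∃ v ∈ A 0, H.walkLen i v u}}
  Adj A B :=
    (∀ i j : Fin (r+1), (j : ℕ) = (i : ℕ) + 1 → A.1 i ⊆ B.1 j ∧ B.1 i ⊆ A.1 j) ∧
    ∀ j : Fin (r+1), ∀ a ∈ A.1 j, ∀ b ∈ B.1 j, H.Adj a b
  symm := by
    rintro A B ⟨h1, h2⟩
    exact ⟨fun i j hij => ⟨(h1 i j hij).2, (h1 i j hij).1⟩,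
           fun j b hb a ha => H.symm _ _ (h2 j a ha b hb)⟩

/-- The circular complete graph `K_{n/d}`. -/
def circGraph (n d : ℕ) : SGraph where
  V := Fin n
  Adj u v := (d : ℤ) ≤ |(u : ℤ) - (v : ℤ)| ∧ |(u : ℤ) - (v : ℤ)| ≤ (n : ℤ) - d
  symm := by
    intro u v h
    rwa [abs_sub_comm]

/-- The circular chromatic number, as a real number. -/
noncomputable def circChrom (G : SGraph) : ℝ :=
  sInf {x : ℝ | ∃ n d : ℕ, 0 < d ∧ 2 * d ≤ n ∧ Nat.gcd n d = 1 ∧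
    x = (n : ℝ) / (d : ℝ) ∧ G.homTo (circGraph n d)}

/-- The cycle on `m` vertices. -/
def cycleGraph (m : ℕ) : SGraph :=
  ⟨ZMod m, fun i j => i = j + 1 ∨ j = i + 1, fun _ _ h => h.symm⟩

/-- SGraph isomorphism. -/
def Isom (G H : SGraph) : Prop :=
  ∃ f : G.V ≃ H.V, ∀ u v, G.Adj u v ↔ H.Adj (f u) (f v)

/-- The helical graph `H(m,n,k)`. -/
def helical (m n k : ℕ) : SGraph where
  V := {A : Fin k → Set (Fin m) //
        (∀ h : 0 < k, (A ⟨0, h⟩).ncard = n) ∧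
        (∀ i, n ≤ (A i).ncard) ∧
        (∀ i : Fin k, ∀ h : (i : ℕ) + 1 < k, A i ∩ A ⟨(i : ℕ) + 1, h⟩ = ∅) ∧
        (∀ i : Fin k, ∀ h : (i : ℕ) + 2 < k, A i ⊆ A ⟨(i : ℕ) + 2, h⟩)}
  Adj A B :=
    (∀ i, A.1 i ∩ B.1 i = ∅) ∧
    (∀ i : Fin k, ∀ h : (i : ℕ) + 1 < k,
      A.1 i ⊆ B.1 ⟨(i : ℕ) + 1, h⟩ ∧ B.1 i ⊆ A.1 ⟨(i : ℕ) + 1, h⟩)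
  symm := by
    rintro A B ⟨h1, h2⟩
    refine ⟨fun i => ?_, fun i h => ⟨(h2 i h).2, (h2 i h).1⟩⟩
    rw [Set.inter_comm]
    exact h1 i

/-- A graph with chromatic number `k` is colorful if every proper `k`-coloring
admits a (nonempty) induced subgraph all of whose vertices see all `k` colors in
their closed neighborhood. -/
def Colorful (G : SGraph) : Prop :=
  ∀ c : G.V → Fin G.chromatic, (∀ u v, G.Adj u v → c u ≠ c v) →
    ∃ S : Set G.V, S.Nonempty ∧
      ∀ v ∈ S, ∀ col : Fin G.chromatic,
        ∃ u ∈ S, (u = v ∨ G.Adj v u) ∧ c u = col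

end SGraph

open SGraph
/-- The power thickness `θ(G)` (with the condition `χ(G^{(2r+1)/(2s+1)}) = χ(G)`). -/
noncomputable def SGraph.powerThicknessEq (G : SGraph) : ℝ :=
  sSup {x : ℝ | ∃ r s : ℕ, x = (2*(r:ℝ)+1)/(2*(s:ℝ)+1) ∧
    (((G.subdiv s).pow (2*r+1)).chromatic = G.chromatic) ∧
    G.ltOddGirth ((2*(r:ℚ)+1)/(2*(s:ℚ)+1))}
namespace SGraph

variable {G : SGraph}

theorem walkLen_append (G : SGraph) : ∀ (m n : ℕ) (a b c : G.V),
    G.walkLen m a b → G.walkLen n b c → G.walkLen (m+n) a c := by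
  intro m
  induction m with
  | zero =>
      intro n a b c h1 h2
      cases h1
      simpa using h2
  | succ m ih =>
      rintro n a b c ⟨w, haw, hwb⟩ h2
      have : m + 1 + n = (m + n) + 1 := by omega
      rw [this]
      exact ⟨w, haw, ih n w b c hwb h2⟩

theorem walkLen_pad2 (G : SGraph) {a b w : G.V} {n : ℕ}
    (h : G.Adj a w) (hw : G.walkLen n a b) : G.walkLen (n+2) a b :=
  ⟨w, h, a, G.symm _ _ h, hw⟩

theorem walkLen_pad (G : SGraph) {a b w : G.V} {n : ℕ}
    (h : G.Adj a w) (hw : G.walkLen n a b) : ∀ k, G.walkLen (n + 2*k) a b := by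
  intro k
  induction k with
  | zero => simpa using hw
  | succ k ih =>
      have e : n + 2*(k+1) = (n + 2*k) + 2 := by omega
      rw [e]
      exact G.walkLen_pad2 h ih

theorem walkLen_of_loop (G : SGraph) {a : G.V} (h : G.Adj a a) :
    ∀ n, G.walkLen n a a := by
  intro n
  induction n with
  | zero => rfl
  | succ n ih => exact ⟨a, h, ih⟩

theorem hom_walkLen {G H : SGraph} {f : G.V → H.V}
    (hf : ∀ u v, G.Adj u v → H.Adj (f u) (f v)) :
    ∀ (n : ℕ) (u v : G.V), G.walkLen n u v → H.walkLen n (f u) (f v) := by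
  intro n
  induction n with
  | zero => intro u v h; cases h; rfl
  | succ n ih =>
      rintro u v ⟨w, huw, hwv⟩
      exact ⟨f w, hf u w huw, ih w v hwv⟩

theorem homTo_trans {G H K : SGraph} (h1 : G.homTo H) (h2 : H.homTo K) : G.homTo K := by
  obtain ⟨f, hf⟩ := h1
  obtain ⟨g, hg⟩ := h2
  exact ⟨g ∘ f, fun u v huv => hg _ _ (hf u v huv)⟩

theorem chromatic_eq_of_homTo {G H : SGraph} (h1 : G.homTo H) (h2 : H.homTo G) :
    G.chromatic = H.chromatic := by
  unfold chromatic
  congr 1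
  ext m
  exact ⟨fun h => homTo_trans h2 h, fun h => homTo_trans h1 h⟩

/-- Position `p` (0 ≤ p ≤ 2s+1) on the subdivided edge from `v` to `u`. -/
def pv (G : SGraph) (s : ℕ) {v u : G.V} (h : G.Adj v u) (p : ℕ) : G.V ⊕ ({p : G.V × G.V // G.Adj p.1 p.2} × Fin s) :=
  if _h1 : p = 0 then Sum.inl v
  else if _h2 : 2*s+1 ≤ p then Sum.inl u
  else if _h3 : p % 2 = 1 then
    Sum.inr (⟨(u,v), G.symm _ _ h⟩, ⟨s - (p+1)/2, by omega⟩)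
  else
    Sum.inr (⟨(v,u), h⟩, ⟨p/2 - 1, by omega⟩)

theorem pv_zero (G : SGraph) (s : ℕ) {v u : G.V} (h : G.Adj v u) :
    G.pv s h 0 = Sum.inl v := by simp [pv]

theorem pv_last (G : SGraph) (s : ℕ) {v u : G.V} (h : G.Adj v u) :
    G.pv s h (2*s+1) = Sum.inl u := by
  rw [pv, dif_neg (by omega), dif_pos (by omega)]

theorem pv_step (G : SGraph) (s : ℕ) {v u : G.V} (h : G.Adj v u) {p : ℕ}
    (hp : p < 2*s+1) : (G.subdiv s).Adj (G.pv s h p) (G.pv s h (p+1)) := by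
  rcases Nat.eq_zero_or_pos p with hp0 | hp0
  · subst hp0
    rcases Nat.eq_zero_or_pos s with hs | hs
    · subst hs
      rw [pv, pv, dif_pos rfl, dif_neg (by omega), dif_pos (by omega)]
      exact ⟨rfl, h⟩
    · rw [pv, pv, dif_pos rfl, dif_neg (by omega), dif_neg (by omega),
        dif_pos (by omega)]
      exact ⟨rfl, by simp only [Fin.val_mk]⟩
  · rcases Nat.even_or_odd p with hpe | hpo
    · -- p even, 2 ≤ p ≤ 2s
      have hpm : p % 2 = 0 := Nat.even_iff.mp hpe
      rcases Nat.lt_or_ge (p+1) (2*s+1) with hlt | hge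
      · -- p+1 inner, odd
        rw [pv, pv, dif_neg (by omega), dif_neg (by omega), dif_neg (by omega),
          dif_neg (by omega), dif_neg (by omega), dif_pos (by omega)]
        exact ⟨rfl, rfl, by simp only [Fin.val_mk]; omega⟩
      · -- p = 2s, p+1 = 2s+1
        rw [pv, pv, dif_neg (by omega), dif_neg (by omega), dif_neg (by omega),
          dif_neg (by omega), dif_pos (by omega)]
        exact ⟨rfl, by simp only [Fin.val_mk]; omega⟩
    · -- p odd inner; p+1 even, and p+1 < 2s+1 (since p+1 even ≠ 2s+1)
      have hpm : p % 2 = 1 := Nat.odd_iff.mp hpo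
      have hlt : p + 1 < 2*s+1 := by omega
      rw [pv, pv, dif_neg (by omega), dif_neg (by omega), dif_pos hpm,
        dif_neg (by omega), dif_neg (by omega), dif_neg (by omega)]
      exact ⟨rfl, rfl, by simp only [Fin.val_mk]; omega⟩

theorem pv_walk (G : SGraph) (s : ℕ) {v u : G.V} (h : G.Adj v u) {a b : ℕ}
    (hab : a ≤ b) (hb : b ≤ 2*s+1) :
    (G.subdiv s).walkLen (b - a) (G.pv s h a) (G.pv s h b) := by
  induction b, hab using Nat.le_induction with
  | base => rw [Nat.sub_self]; exact rfl
  | succ b hab ih =>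
      have e : b + 1 - a = (b - a) + 1 := by omega
      rw [e]
      exact (G.subdiv s).walkLen_concat _ _ _ _ (ih (by omega)) (G.pv_step s h (by omega))

end SGraph

namespace SGraph

/-- Walk of length `2s+3` between the images of adjacent vertices of `G`. -/
theorem walk_inl_inl (G : SGraph) (s : ℕ) {v u : G.V} (h : G.Adj v u) :
    (G.subdiv s).walkLen (2*s+3) (Sum.inl v) (Sum.inl u) := by
  have w1 : (G.subdiv s).walkLen (2*s+1) (Sum.inl v) (Sum.inl u) := by
    have := G.pv_walk s h (Nat.zero_le (2*s+1)) (le_refl (2*s+1))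
    rwa [Nat.sub_zero, pv_zero, pv_last] at this
  have hadj : (G.subdiv s).Adj (Sum.inl v) (G.pv s h 1) := by
    have := G.pv_step s h (p := 0) (by omega)
    rwa [pv_zero] at this
  have := (G.subdiv s).walkLen_pad2 hadj w1
  have e : 2*s+1+2 = 2*s+3 := by omega
  rwa [e] at this

/-- Walk of length `2s+3` from position `2(i+1)` (from `v` on edge `vx`) to
position `2i` (from `u` on edge `uv`). -/
theorem walk_force (G : SGraph) (s : ℕ) {v x u : G.V} (h : G.Adj v x)
    (h' : G.Adj u v) {i : ℕ} (hi : i + 1 ≤ s) :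
    (G.subdiv s).walkLen (2*s+3) (G.pv s h (2*(i+1))) (G.pv s h' (2*i)) := by
  have w1 : (G.subdiv s).walkLen (2*(i+1)) (G.pv s h (2*(i+1))) (Sum.inl v) := by
    have := (G.subdiv s).walkLen_symm _ _ _
      (G.pv_walk s h (Nat.zero_le (2*(i+1))) (by omega))
    rwa [Nat.sub_zero, pv_zero] at this
  have w2 : (G.subdiv s).walkLen (2*s+1 - 2*i) (Sum.inl v) (G.pv s h' (2*i)) := by
    have := (G.subdiv s).walkLen_symm _ _ _
      (G.pv_walk s h' (a := 2*i) (by omega) (le_refl (2*s+1)))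
    rwa [pv_last] at this
  have := (G.subdiv s).walkLen_append _ _ _ _ _ w1 w2
  have e : 2*(i+1) + (2*s+1 - 2*i) = 2*s+3 := by omega
  rwa [e] at this

/-- Walk of length `2s+3` between position `2s` from `v` on edge `vx` and
position `2s` from `z` on edge `zw`, provided `x ~ w`. -/
theorem walk_final (G : SGraph) (s : ℕ) {v x w z : G.V} (h1 : G.Adj v x)
    (h2 : G.Adj x w) (h3 : G.Adj z w) :
    (G.subdiv s).walkLen (2*s+3) (G.pv s h1 (2*s)) (G.pv s h3 (2*s)) := by
  have w1 : (G.subdiv s).walkLen 1 (G.pv s h1 (2*s)) (Sum.inl x) := by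
    refine ⟨G.pv s h1 (2*s+1), ?_, ?_⟩
    · exact G.pv_step s h1 (by omega)
    · rw [pv_last]
      exact rfl
  have w2 : (G.subdiv s).walkLen (2*s+1) (Sum.inl x) (Sum.inl w) := by
    have := G.pv_walk s h2 (Nat.zero_le (2*s+1)) (le_refl (2*s+1))
    rwa [Nat.sub_zero, pv_zero, pv_last] at this
  have w3 : (G.subdiv s).walkLen 1 (Sum.inl w) (G.pv s h3 (2*s)) := by
    refine ⟨G.pv s h3 (2*s), ?_, rfl⟩
    have := (G.subdiv s).symm _ _ (G.pv_step s h3 (p := 2*s) (by omega))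
    rwa [pv_last] at this
  have := (G.subdiv s).walkLen_append _ _ _ _ _
    ((G.subdiv s).walkLen_append _ _ _ _ _ w1 w2) w3
  have e : 1 + (2*s+1) + 1 = 2*s+3 := by omega
  rwa [e] at this

theorem exists_third {k : ℕ} (hk : 3 ≤ k) (a b : Fin k) :
    ∃ c : Fin k, c ≠ a ∧ c ≠ b := by
  refine ⟨⟨if a.val = 0 ∨ b.val = 0 then if a.val = 1 ∨ b.val = 1 then 2 else 1
      else 0, by split_ifs <;> omega⟩, ?_, ?_⟩ <;>
  · simp only [ne_eq, Fin.ext_iff, Fin.val_mk]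
    split_ifs <;> omega

/-- The main combinatorial argument. -/
theorem main_contradiction (G : SGraph) (s : ℕ)
    (cP : (G.subdiv s).V → Fin (G.chromatic))
    (hcP : ∀ a b, (G.subdiv s).walkLen (2*s+3) a b → cP a ≠ cP b)
    (S : Set G.V)
    (hS : ∀ v ∈ S, ∀ col : Fin G.chromatic,
      ∃ u ∈ S, (u = v ∨ G.Adj v u) ∧ cP (Sum.inl u) = col)
    (hSne : S.Nonempty) (hk : 3 ≤ G.chromatic) : False := by
  -- forcing: all "even" inner vertices near an `S`-vertex get its color
  have force : ∀ i, i ≤ s → ∀ v, v ∈ S → ∀ x, ∀ h : G.Adj v x,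
      cP (G.pv s h (2*i)) = cP (Sum.inl v) := by
    intro i
    induction i with
    | zero =>
        intro _ v _ x h
        have : 2*0 = 0 := rfl
        rw [this, pv_zero]
    | succ i ih =>
        intro hi v hv x h
        by_contra hne
        obtain ⟨u, huS, hor, hcol⟩ := hS v hv (cP (G.pv s h (2*(i+1))))
        rcases hor with rfl | hadj
        · exact hne hcol.symm
        · have h' : G.Adj u v := G.symm _ _ hadj
          have ihv : cP (G.pv s h' (2*i)) = cP (Sum.inl u) :=
            ih (by omega) u huS v h'
          exact hcP _ _ (G.walk_force s h h' hi) (by rw [ihv, hcol])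
  obtain ⟨v₀, hv₀⟩ := hSne
  obtain ⟨col1, hc1, -⟩ := exists_third hk (cP (Sum.inl v₀)) (cP (Sum.inl v₀))
  obtain ⟨x, hxS, hxor, hxc⟩ := hS v₀ hv₀ col1
  have h1 : G.Adj v₀ x := by
    rcases hxor with rfl | h
    · exact absurd hxc.symm hc1
    · exact h
  obtain ⟨col2, hc2x, hc2v⟩ := exists_third hk (cP (Sum.inl x)) (cP (Sum.inl v₀))
  obtain ⟨w, hwS, hwor, hwc⟩ := hS x hxS col2
  have h2 : G.Adj x w := by
    rcases hwor with rfl | h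
    · exact absurd hwc.symm hc2x
    · exact h
  obtain ⟨z, hzS, hzor, hzc⟩ := hS w hwS (cP (Sum.inl v₀))
  have h3' : G.Adj w z := by
    rcases hzor with rfl | h
    · exact absurd (hwc.symm.trans hzc) hc2v
    · exact h
  have h3 : G.Adj z w := G.symm _ _ h3'
  have hfin := hcP _ _ (G.walk_final s h1 h2 h3)
  rw [force s (le_refl s) v₀ hv₀ x h1, force s (le_refl s) z hzS w h3, hzc] at hfin
  exact hfin rfl

end SGraph

namespace SGraph

theorem completeGraph_walk_parity {m : ℕ} (hm : m ≤ 2) :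
    ∀ (n : ℕ) (u v : Fin m), (completeGraph m).walkLen n u v → (u = v ↔ Even n) := by
  intro n
  induction n with
  | zero =>
      intro u v h
      cases h
      simp
  | succ n ih =>
      rintro u v ⟨w, huw, hwv⟩
      have h1 := ih w v hwv
      have h2 : u ≠ w := huw
      have hu := u.isLt
      have hv := v.isLt
      have hw := w.isLt
      simp only [Fin.ext_iff, Nat.even_iff] at h1 h2 ⊢
      omega

theorem chromatic_eq_zero_of_loop (H : SGraph) (v : H.V) (h : H.Adj v v) :
    H.chromatic = 0 := by
  have he : {m : ℕ | H.homTo (completeGraph m)} = ∅ := by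
    ext m
    simp only [Set.mem_setOf_eq, Set.mem_empty_iff_false, iff_false]
    rintro ⟨f, hf⟩
    exact (hf v v h) rfl
  unfold chromatic
  rw [he, Nat.sInf_empty]

theorem three_le_chromatic (G : SGraph) (hG : G.Nonbipartite) (hf : Finite G.V)
    (hll : ∀ v, ¬ G.Adj v v) :
    3 ≤ G.chromatic ∧ G.homTo (completeGraph G.chromatic) := by
  have hne : {m : ℕ | G.homTo (completeGraph m)}.Nonempty := by
    obtain ⟨n, ⟨e⟩⟩ := Finite.exists_equiv_fin G.V
    refine ⟨n, e, fun u v huv hequ => ?_⟩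
    have : u = v := e.injective hequ
    subst this
    exact hll u huv
  have hmem : G.chromatic ∈ {m : ℕ | G.homTo (completeGraph m)} := Nat.sInf_mem hne
  refine ⟨?_, hmem⟩
  obtain ⟨f, hf⟩ := hmem
  obtain ⟨n, v, hodd, hwalk⟩ := hG
  by_contra hlt
  have hm2 : G.chromatic ≤ 2 := by omega
  have := completeGraph_walk_parity hm2 n (f v) (f v) (hom_walkLen hf n v v hwalk)
  rw [Nat.odd_iff] at hodd
  rw [Nat.even_iff] at this
  replace this := this.mp rfl
  omega

/-- If `χ((S_{2s+1}G)^{2r+1}) = χ(G)` with `r ≥ s+1` for a finite loopless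
non-bipartite colorful `G`, contradiction. -/
theorem no_big_power (G : SGraph) (hG : G.Nonbipartite) (hf : Finite G.V)
    (hc : G.Colorful) (hll : ∀ v, ¬ G.Adj v v) {r s : ℕ} (hrs : s + 1 ≤ r)
    (hχ : ((G.subdiv s).pow (2*r+1)).chromatic = G.chromatic) : False := by
  obtain ⟨hk3, -⟩ := G.three_le_chromatic hG hf hll
  -- get a proper coloring of the power with χ(G) colors
  have hPne : {m : ℕ | ((G.subdiv s).pow (2*r+1)).homTo (completeGraph m)}.Nonempty := by
    by_contra hemp
    rw [Set.not_nonempty_iff_eq_empty] at hemp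
    have : ((G.subdiv s).pow (2*r+1)).chromatic = 0 := by
      unfold chromatic
      rw [hemp, Nat.sInf_empty]
    omega
  have hmem := Nat.sInf_mem hPne
  rw [show sInf {m : ℕ | ((G.subdiv s).pow (2*r+1)).homTo (completeGraph m)} =
      ((G.subdiv s).pow (2*r+1)).chromatic from rfl, hχ] at hmem
  obtain ⟨cP, hcPadj⟩ := hmem
  -- cP is proper for walks of length 2r+1 in the subdivision
  have hcP : ∀ a b, (G.subdiv s).walkLen (2*s+3) a b → cP a ≠ cP b := by
    intro a b hw
    have : (G.subdiv s).walkLen (2*r+1) a b := by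
      obtain ⟨w, haw, -⟩ := id hw
      have := (G.subdiv s).walkLen_pad haw hw (r - s - 1)
      have e : 2*s+3 + 2*(r - s - 1) = 2*r+1 := by omega
      rwa [e] at this
    exact hcPadj a b this
  -- the induced coloring of G is proper
  set γ : G.V → Fin G.chromatic := fun v => cP (Sum.inl v) with hγ
  have hγprop : ∀ u v, G.Adj u v → γ u ≠ γ v := by
    intro u v huv
    exact hcP _ _ (G.walk_inl_inl s huv)
  obtain ⟨S, hSne, hSprop⟩ := hc γ hγprop
  exact G.main_contradiction s cP hcP S hSprop hSne hk3

theorem chromatic_subdiv_zero_pow_one (G : SGraph) :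
    ((G.subdiv 0).pow 1).chromatic = G.chromatic := by
  refine chromatic_eq_of_homTo ?_ ?_
  · -- (subdiv 0).pow 1 → G
    refine ⟨Sum.elim id (fun pe => (pe.2 : Fin 0).elim0), ?_⟩
    rintro a b ⟨w, hw, h0⟩
    have hb : w = b := h0
    subst hb
    rcases a with u | ⟨e, i⟩
    · rcases w with v | ⟨e', i'⟩
      · exact hw.2
      · exact i'.elim0
    · exact i.elim0
  · refine ⟨Sum.inl, ?_⟩
    intro u v huv
    exact ⟨Sum.inl v, ⟨rfl, huv⟩, rfl⟩

end SGraph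

namespace SGraph

theorem loopy_power_chromatic (G : SGraph) {v : G.V} (hvv : G.Adj v v) {t : ℕ}
    (ht : 1 ≤ t) : ((G.subdiv t).pow (2*(t-1)+1)).chromatic = 0 := by
  set L : (G.subdiv t).V := Sum.inr (⟨(v,v), hvv⟩, ⟨(t-1)/2, by omega⟩) with hL
  have hloop : (G.subdiv t).Adj L L := ⟨rfl, rfl, by simp only [Fin.val_mk]; omega⟩
  have hwalk : (G.subdiv t).walkLen (2*(t-1)+1) L L :=
    (G.subdiv t).walkLen_of_loop hloop _
  exact chromatic_eq_zero_of_loop _ L hwalk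

end SGraph

theorem colorful_powerThickness' (G : SGraph) (hG : G.Nonbipartite) (hf : Finite G.V)
    (hc : G.Colorful) : G.powerThicknessEq = 1 := by
  unfold SGraph.powerThicknessEq
  set A : Set ℝ := {x : ℝ | ∃ r s : ℕ, x = (2*(r:ℝ)+1)/(2*(s:ℝ)+1) ∧
    (((G.subdiv s).pow (2*r+1)).chromatic = G.chromatic) ∧
    G.ltOddGirth ((2*(r:ℚ)+1)/(2*(s:ℚ)+1))} with hA
  have hxle : ∀ r s : ℕ, r ≤ s → (2*(r:ℝ)+1)/(2*(s:ℝ)+1) ≤ 1 := by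
    intro r s hrs
    rw [div_le_one (by positivity)]
    have : (r:ℝ) ≤ (s:ℝ) := Nat.cast_le.mpr hrs
    linarith
  by_cases hloop : ∃ v, G.Adj v v
  · -- G has a loop
    obtain ⟨v, hvv⟩ := hloop
    have hub : ∀ x ∈ A, x ≤ 1 := by
      rintro x ⟨r, s, rfl, hχ, hog⟩
      have h1 : ((2*(r:ℚ)+1)/(2*(s:ℚ)+1)) < (1:ℚ) := by
        have := hog 1 (by exact ⟨0, by omega⟩) ⟨v, ⟨v, hvv, rfl⟩⟩
        simpa using this
      rw [div_lt_one (by positivity)] at h1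
      have hrs : r ≤ s := by
        have h2 : (r:ℚ) < (s:ℚ) + 1 := by linarith
        have h3 : r < s + 1 := by exact_mod_cast h2
        omega
      exact hxle r s hrs
    have hmemt : ∀ t : ℕ, 1 ≤ t → ((2*((t-1:ℕ):ℝ)+1)/(2*(t:ℝ)+1)) ∈ A := by
      intro t ht
      refine ⟨t-1, t, rfl, ?_, ?_⟩
      · rw [G.loopy_power_chromatic hvv ht, SGraph.chromatic_eq_zero_of_loop G v hvv]
      · intro n hodd _
        have hn1 : 1 ≤ n := by
          rcases hodd with ⟨m, hm⟩; omega
        have hq1 : (2*((t-1:ℕ):ℚ)+1)/(2*(t:ℚ)+1) < 1 := by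
          rw [div_lt_one (by positivity)]
          have h1 : ((t-1:ℕ):ℚ) ≤ (t:ℚ) - 1 := by
            rw [Nat.cast_sub ht]; simp
          linarith
        calc (2*((t-1:ℕ):ℚ)+1)/(2*(t:ℚ)+1) < 1 := hq1
          _ ≤ (n:ℚ) := by exact_mod_cast hn1
    have hbdd : BddAbove A := ⟨1, fun x hx => hub x hx⟩
    refine le_antisymm (csSup_le ⟨_, hmemt 1 le_rfl⟩ hub) ?_
    by_contra hlt
    push_neg at hlt
    set d : ℝ := 1 - sSup A with hd
    have hdpos : 0 < d := by simp only [hd]; linarith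
    obtain ⟨t, ht⟩ := exists_nat_gt (1/d)
    have ht1 : 1 ≤ t := by
      have : (0:ℝ) < 1/d := by positivity
      have : (0:ℝ) < (t:ℝ) := lt_trans this ht
      exact_mod_cast Nat.succ_le_of_lt (by exact_mod_cast this)
    have hle := le_csSup hbdd (hmemt t ht1)
    have hcast : ((t-1:ℕ):ℝ) = (t:ℝ) - 1 := by
      rw [Nat.cast_sub ht1]; simp
    rw [hcast] at hle
    have htd : 1 < (t:ℝ) * d := by
      rw [div_lt_iff₀ hdpos] at ht
      linarith
    have : sSup A < (2*((t:ℝ)-1)+1)/(2*(t:ℝ)+1) := by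
      rw [lt_div_iff₀ (by positivity)]
      nlinarith
    linarith
  · -- G is loopless
    push_neg at hloop
    have h1mem : (1:ℝ) ∈ A := by
      refine ⟨0, 0, by norm_num, ?_, ?_⟩
      · exact G.chromatic_subdiv_zero_pow_one
      · rintro n hodd ⟨w, hw⟩
        have hn : n ≠ 1 := by
          intro h
          subst h
          obtain ⟨w', hw', h0⟩ := hw
          have : w' = w := h0
          subst this
          exact hloop _ hw'
        have hn3 : 2 ≤ n := by
          rcases hodd with ⟨m, hm⟩; omega
        have h2 : ((2:ℚ)) ≤ (n:ℚ) := by exact_mod_cast hn3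
        push_cast
        norm_num
        linarith
    have hub : ∀ x ∈ A, x ≤ 1 := by
      rintro x ⟨r, s, rfl, hχ, hog⟩
      rcases Nat.lt_or_ge s r with hlt | hge
      · exact absurd hχ (fun h => G.no_big_power hG hf hc hloop (by omega) h)
      · exact hxle r s hge
    exact le_antisymm (csSup_le ⟨1, h1mem⟩ hub) (le_csSup ⟨1, fun x hx => hub x hx⟩ h1mem)


/-- Every non-bipartite colorful graph has power thickness 1. -/
theorem colorful_powerThickness (G : SGraph) (hG : G.Nonbipartite) (hf : Finite G.V)
    (hc : G.Colorful) : G.powerThicknessEq = 1 := by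
  exact colorful_powerThickness' G hG hf hc
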